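/- Let A be a type, let R1 ⊆ A* be a right ideal, and let φ : A* → A* satisfy φ(x ++ w) = φ(x) ++ w for all x ∈ R1 and all w ∈ A*. Let R'1 ⊆ R1 be a right ideal that is essential in R1, i.e., R'1 has nonempty intersection with every right ideal of A* that has nonempty intersection with R1. Then the image sets φ(R'1) ⊆ φ(R1) are right ideals of A*, and φ(R'1) is essential in φ(R1), i.e., φ(R'1) has nonempty intersection with every right ideal of A* that has nonempty intersection with φ(R1). -/

import Mathlib

/-- A right ideal of the free monoid `A*`: closed under appending arbitrary words. -/
def IsRightIdeal {A : Type*} (R : Set (List A)) : Prop :=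
  ∀ r ∈ R, ∀ w : List A, r ++ w ∈ R

/-- If `R'1 ⊆ R1` are right ideals, `R'1` essential in `R1`, and `φ` is a right-ideal
homomorphism on `R1`, then `φ(R'1) ⊆ φ(R1)` are right ideals and `φ(R'1)` is essential
in `φ(R1)`. -/
theorem image_essential_of_essential {A : Type*} (R1 R'1 : Set (List A))
    (φ : List A → List A)
    (hR1 : IsRightIdeal R1) (hR'1 : IsRightIdeal R'1) (hsub : R'1 ⊆ R1)
    (hφ : ∀ x ∈ R1, ∀ w : List A, φ (x ++ w) = φ x ++ w)
    (hess : ∀ I : Set (List A), IsRightIdeal I → (I ∩ R1).Nonempty → (I ∩ R'1).Nonempty) :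
    IsRightIdeal (φ '' R1) ∧ IsRightIdeal (φ '' R'1) ∧ φ '' R'1 ⊆ φ '' R1 ∧
    (∀ I : Set (List A), IsRightIdeal I → (I ∩ φ '' R1).Nonempty →
      (I ∩ φ '' R'1).Nonempty) := by
  refine ⟨?_, ?_, Set.image_mono hsub, ?_⟩
  · rintro _ ⟨x, hx, rfl⟩ w
    exact ⟨x ++ w, hR1 x hx w, (hφ x hx w)⟩
  · rintro _ ⟨x, hx, rfl⟩ w
    exact ⟨x ++ w, hR'1 x hx w, (hφ x (hsub hx) w)⟩
  · rintro I hI ⟨_, hyI, x, hx, rfl⟩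
    obtain ⟨z, ⟨w, rfl⟩, hz'⟩ := hess {y | ∃ w, y = x ++ w}
      (by rintro _ ⟨w, rfl⟩ v; exact ⟨w ++ v, by simp⟩) ⟨x, ⟨[], by simp⟩, hx⟩
    exact ⟨φ (x ++ w), by rw [hφ x hx w]; exact hI _ hyI w, ⟨x ++ w, hz', rfl⟩⟩
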